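/- arXiv:1404.3293 — 3 statements merged into one kernel-verified Lean document; each statement's English description precedes it below -/
import Mathlib

section
/- (a) K(0,ω) = ξ̄^{−1} for every ω ∈ Ω. (b) If moreover, for a fixed ω ∈ Ω, the function ξ ↦ ∫_Ω k(ω',ξ,ω) d𝕡(ω') is continuous at a point ξ₀ > 0, then ξ ↦ K(ξ,ω) is differentiable at ξ₀ and −(∂/∂ξ) K(ξ,ω)|_{ξ=ξ₀} = ∫_Ω K(0,ω') k(ω',ξ₀,ω) d𝕡(ω'). (This is the identity expressing that f(ξ,ω) = K(ξ,ω) is a stationary solution of the transport equation (∂_t − ∂_ξ) f = 𝒞 f.) -/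
noncomputable section
open MeasureTheory Topology Filter Set
open scoped ENNReal

namespace LorentzGas

/-- The integrated collision kernel K(ξ, ω) = ξ̄⁻¹ ∫_ξ^∞ ∫_Ω k(ω',ξ',ω) d𝕡(ω') dξ'. -/
def Kker {Ω : Type*} [MeasurableSpace Ω] (p : Measure Ω) (ξbar : ℝ)
    (k : Ω → ℝ → Ω → ℝ) (ξ : ℝ) (ω : Ω) : ℝ :=
  ξbar⁻¹ * (∫⁻ ξ' in Set.Ici ξ, ∫⁻ ω', ENNReal.ofReal (k ω' ξ' ω) ∂p).toReal

/-- (a) K(0, ω) = ξ̄⁻¹; (b) wherever ξ ↦ ∫_Ω k(ω',ξ,ω) d𝕡(ω') is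
continuous, ξ ↦ K(ξ,ω) is differentiable with
−∂_ξ K(ξ,ω) = ∫_Ω K(0,ω') k(ω',ξ,ω) d𝕡(ω'); i.e. K is a stationary solution of the
transport equation (∂_t − ∂_ξ) f = 𝒞 f. -/
theorem statement9 {Ω : Type*} [MeasurableSpace Ω] (p : Measure Ω)
    [IsProbabilityMeasure p] (ξbar : ℝ) (hξbar : 0 < ξbar)
    (k : Ω → ℝ → Ω → ℝ)
    (hkmeas : Measurable fun q : Ω × ℝ × Ω => k q.1 q.2.1 q.2.2)
    (hknonneg : ∀ ω' ξ ω, 0 ≤ ξ → 0 ≤ k ω' ξ ω)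
    (hksymm : ∀ ω' ξ ω, 0 ≤ ξ → k ω ξ ω' = k ω' ξ ω)
    (hknorm : ∀ ω', ∫⁻ ξ in Set.Ici (0 : ℝ), ∫⁻ ω, ENNReal.ofReal (k ω' ξ ω) ∂p = 1) :
    (∀ ω : Ω, Kker p ξbar k 0 ω = ξbar⁻¹) ∧
    (∀ (ω : Ω) (ξ₀ : ℝ), 0 < ξ₀ →
      ContinuousAt (fun ξ => (∫⁻ ω', ENNReal.ofReal (k ω' ξ ω) ∂p).toReal) ξ₀ →
      HasDerivAt (fun ξ => Kker p ξbar k ξ ω)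
        (-(∫ ω', Kker p ξbar k 0 ω' * k ω' ξ₀ ω ∂p)) ξ₀) := by
  -- normalized integral with roles swapped by symmetry
  have haveA : ∀ ω : Ω, ∫⁻ ξ in Set.Ici (0:ℝ), ∫⁻ ω', ENNReal.ofReal (k ω' ξ ω) ∂p = 1 := by
    intro ω
    rw [← hknorm ω]
    refine setLIntegral_congr_fun measurableSet_Ici ?_
    intro ξ hξ
    exact lintegral_congr fun ω' => by rw [hksymm ω' ξ ω hξ]
  have partA : ∀ ω : Ω, Kker p ξbar k 0 ω = ξbar⁻¹ := by
    intro ω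
    unfold Kker
    rw [haveA ω]
    simp
  refine ⟨partA, ?_⟩
  intro ω ξ₀ hξ₀ hcont
  set g : ℝ → ENNReal := fun ξ => ∫⁻ ω', ENNReal.ofReal (k ω' ξ ω) ∂p with hgdef
  set h : ℝ → ℝ := fun ξ => (g ξ).toReal with hhdef
  have hgmeas : Measurable g := by
    rw [hgdef]
    exact Measurable.lintegral_prod_right <| ENNReal.measurable_ofReal.comp
      (hkmeas.comp ((measurable_snd.prodMk (measurable_fst.prodMk measurable_const))))
  have hhmeas : Measurable h := hgmeas.ennreal_toReal
  have hfin : ∫⁻ ξ in Set.Ici (0:ℝ), g ξ ≠ ⊤ := by rw [haveA ω]; exact ENNReal.one_ne_top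
  have hae : ∀ᵐ ξ ∂(volume.restrict (Set.Ici (0:ℝ))), g ξ < ⊤ :=
    ae_lt_top hgmeas hfin
  have hint : IntegrableOn h (Set.Ici (0:ℝ)) :=
    integrable_toReal_of_lintegral_ne_top hgmeas.aemeasurable.restrict hfin
  -- key rewriting of Kker for ξ > 0
  have key : ∀ ξ : ℝ, 0 < ξ →
      Kker p ξbar k ξ ω = ξbar⁻¹ * (1 - ∫ t in (0:ℝ)..ξ, h t) := by
    intro ξ hξ
    have hsplit : (1 : ℝ≥0∞) = (∫⁻ t in Set.Ico (0:ℝ) ξ, g t) + ∫⁻ t in Set.Ici ξ, g t := by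
      rw [← haveA ω, ← Set.Ico_union_Ici_eq_Ici hξ.le]
      exact lintegral_union measurableSet_Ici (Set.disjoint_left.mpr fun a ha hb => lt_irrefl a (lt_of_lt_of_le ha.2 hb))
    have hIco_fin : (∫⁻ t in Set.Ico (0:ℝ) ξ, g t) ≠ ⊤ := by
      intro htop
      rw [htop] at hsplit
      simp at hsplit
    have hIci_fin : (∫⁻ t in Set.Ici ξ, g t) ≠ ⊤ := by
      intro htop
      rw [htop] at hsplit
      simp at hsplit
    have hIcoae : ∀ᵐ t ∂(volume.restrict (Set.Ico (0:ℝ) ξ)), g t < ⊤ :=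
      ae_lt_top hgmeas hIco_fin
    have h1 : (∫⁻ t in Set.Ici ξ, g t).toReal = 1 - (∫⁻ t in Set.Ico (0:ℝ) ξ, g t).toReal := by
      have := congrArg ENNReal.toReal hsplit
      rw [ENNReal.toReal_add hIco_fin hIci_fin] at this
      simp at this
      linarith
    have h2 : (∫⁻ t in Set.Ico (0:ℝ) ξ, g t).toReal = ∫ t in (0:ℝ)..ξ, h t := by
      rw [← integral_toReal hgmeas.aemeasurable.restrict hIcoae]
      rw [intervalIntegral.integral_of_le hξ.le]
      exact setIntegral_congr_set Ico_ae_eq_Ioc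
    unfold Kker
    rw [show (∫⁻ ξ' in Set.Ici ξ, ∫⁻ ω', ENNReal.ofReal (k ω' ξ' ω) ∂p) = ∫⁻ t in Set.Ici ξ, g t from rfl,
      h1, h2]
  -- FTC
  have hii : IntervalIntegrable h volume 0 ξ₀ := by
    rw [intervalIntegrable_iff]
    exact hint.mono_set (fun x hx => le_of_lt ((Set.uIoc_of_le hξ₀.le ▸ hx).1))
  have hFTC : HasDerivAt (fun ξ => ∫ t in (0:ℝ)..ξ, h t) (h ξ₀) ξ₀ :=
    intervalIntegral.integral_hasDerivAt_right hii
      hhmeas.stronglyMeasurable.stronglyMeasurableAtFilter hcont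
  have hG : HasDerivAt (fun ξ => ξbar⁻¹ * (1 - ∫ t in (0:ℝ)..ξ, h t)) (ξbar⁻¹ * (0 - h ξ₀)) ξ₀ :=
    ((hasDerivAt_const ξ₀ (1:ℝ)).sub hFTC).const_mul ξbar⁻¹
  have heq : (fun ξ => Kker p ξbar k ξ ω) =ᶠ[𝓝 ξ₀] fun ξ => ξbar⁻¹ * (1 - ∫ t in (0:ℝ)..ξ, h t) := by
    filter_upwards [Ioi_mem_nhds hξ₀] with ξ hξ
    exact key ξ hξ
  have hF : HasDerivAt (fun ξ => Kker p ξbar k ξ ω) (ξbar⁻¹ * (0 - h ξ₀)) ξ₀ :=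
    hG.congr_of_eventuallyEq heq
  -- identify the derivative value
  have hval : -(∫ ω', Kker p ξbar k 0 ω' * k ω' ξ₀ ω ∂p) = ξbar⁻¹ * (0 - h ξ₀) := by
    have hmk : Measurable (fun ω' => k ω' ξ₀ ω) := by
      exact hkmeas.comp (measurable_id.prodMk (measurable_const : Measurable fun _ : Ω => ((ξ₀, ω) : ℝ × Ω)))
    have hmeask : AEStronglyMeasurable (fun ω' => k ω' ξ₀ ω) p := hmk.aestronglyMeasurable
    have : ∫ ω', Kker p ξbar k 0 ω' * k ω' ξ₀ ω ∂p = ξbar⁻¹ * ∫ ω', k ω' ξ₀ ω ∂p := by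
      simp_rw [partA]
      exact integral_const_mul _ _
    rw [this, integral_eq_lintegral_of_nonneg_ae
      (Filter.Eventually.of_forall fun ω' => hknonneg ω' ξ₀ ω hξ₀.le) hmeask]
    simp [hhdef, hgdef]
  rw [hval]
  exact hF


end LorentzGas
end
end

section
/- (a) ℒ is a full-rank lattice in ℝ^{d+m} (a discrete additive subgroup spanning ℝ^{d+m}). (b) π_int(ℒ) = ℤ^m; in particular π_int(ℒ) is closed and discrete in ℝ^m, so its closure 𝒜 equals ℤ^m and the connected component of 0 in 𝒜 is {0}. (c) With window 𝒲 = {e₁,…,e_m} ⊂ ℤ^m (the standard basis vectors of ℝ^m), the cut-and-project set satisfies { π(ℓ) : ℓ ∈ ℒ, π_int(ℓ) ∈ 𝒲 } = ⋃_{j=1}^m ( t_j + ℒ₀ ). -/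
noncomputable section
open MeasureTheory Topology Filter Set

namespace LorentzGas

/-- A full-rank lattice in a real topological vector space: a discrete additive
subgroup which spans the whole space. -/
def IsFullLatticeIn {V : Type*} [AddCommGroup V] [Module ℝ V] [TopologicalSpace V]
    (L : AddSubgroup V) : Prop :=
  DiscreteTopology L ∧ Submodule.span ℝ (L : Set V) = ⊤

/-- The subgroup ℒ ⊂ ℝ^d × ℝ^m generated by ℒ₀ × {0} and (t_j, e_j), j = 1, …, m:
ℒ = { (x + n₁t₁ + ⋯ + n_mt_m, (n₁,…,n_m)) : x ∈ ℒ₀, n ∈ ℤ^m }. -/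
def periodicCPLattice {d m : ℕ} (L0 : AddSubgroup (Fin d → ℝ)) (t : Fin m → Fin d → ℝ) :
    Set ((Fin d → ℝ) × (Fin m → ℝ)) :=
  {p | ∃ x ∈ L0, ∃ c : Fin m → ℤ,
    p = (x + ∑ j, (c j : ℝ) • t j, fun j => (c j : ℝ))}

/-- A uniformly separated subset of a metric space is discrete. -/
lemma discrete_of_sep {E : Type*} [MetricSpace E] {S : Set E} {ε : ℝ} (hε : 0 < ε)
    (h : ∀ x ∈ S, ∀ y ∈ S, y ≠ x → ε ≤ dist y x) : DiscreteTopology S := by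
  rw [discreteTopology_subtype_iff]
  intro x hx
  rw [Filter.inf_principal_eq_bot, mem_nhdsWithin]
  refine ⟨Metric.ball x ε, Metric.isOpen_ball, Metric.mem_ball_self hε, ?_⟩
  rintro y ⟨hyb, hyne⟩ hyS
  exact absurd (h x hx y hyS hyne) (not_le.mpr hyb)


/-- (a) ℒ is a full-rank lattice in ℝ^{d+m}; (b) π_int(ℒ) = ℤ^m,
which is closed and discrete, has closure ℤ^m, and {0} as connected component of 0;
(c) the cut-and-project set with window {e₁, …, e_m} is ⋃_j (t_j + ℒ₀). -/
theorem statement13 (d m : ℕ) (hd : 1 ≤ d) (hm : 1 ≤ m)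
    (L0 : AddSubgroup (Fin d → ℝ)) (hL0 : IsFullLatticeIn L0)
    (t : Fin m → Fin d → ℝ)
    (hdisj : ∀ j j' : Fin m, j ≠ j' →
      Disjoint ((fun v => t j + v) '' (L0 : Set (Fin d → ℝ)))
        ((fun v => t j' + v) '' (L0 : Set (Fin d → ℝ)))) :
    -- (a)
    (∃ L : AddSubgroup ((Fin d → ℝ) × (Fin m → ℝ)),
      (L : Set ((Fin d → ℝ) × (Fin m → ℝ))) = periodicCPLattice L0 t ∧
        DiscreteTopology L ∧ Submodule.span ℝ (periodicCPLattice L0 t) = ⊤) ∧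
    -- (b)
    (Prod.snd '' periodicCPLattice L0 t
        = Set.range (fun c : Fin m → ℤ => fun j => (c j : ℝ)) ∧
      IsClosed (Prod.snd '' periodicCPLattice L0 t) ∧
      DiscreteTopology (Prod.snd '' periodicCPLattice L0 t) ∧
      closure (Prod.snd '' periodicCPLattice L0 t) = Prod.snd '' periodicCPLattice L0 t ∧
      connectedComponentIn (closure (Prod.snd '' periodicCPLattice L0 t)) 0 = {0}) ∧
    -- (c)
    (Prod.fst '' (periodicCPLattice L0 t ∩
        Prod.snd ⁻¹' (Set.range fun j : Fin m => (Pi.single j (1 : ℝ) : Fin m → ℝ)))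
      = ⋃ j, (fun v => t j + v) '' (L0 : Set (Fin d → ℝ))) := by
  -- separation constant for L0
  have hL0disc : DiscreteTopology ((L0 : Set (Fin d → ℝ)) : Type _) := hL0.1
  obtain ⟨ε, hε, hεL0⟩ : ∃ ε > 0, ∀ v ∈ L0, v ≠ 0 → ε ≤ ‖v‖ := by
    have h0 := (discreteTopology_subtype_iff.mp hL0disc) 0 (L0.zero_mem)
    rw [Filter.inf_principal_eq_bot, Metric.mem_nhdsWithin_iff] at h0
    obtain ⟨ε, hε, hb⟩ := h0
    refine ⟨ε, hε, fun v hv hv0 => ?_⟩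
    by_contra hlt
    push_neg at hlt
    exact hb ⟨by simpa [dist_eq_norm] using hlt, by simpa using hv0⟩ hv
  -- integer vectors are 1-separated
  have hint : ∀ c c' : Fin m → ℤ, c ≠ c' →
      (1 : ℝ) ≤ dist (fun j => (c j : ℝ)) (fun j => (c' j : ℝ)) := by
    intro c c' hne
    obtain ⟨j, hj⟩ := Function.ne_iff.mp hne
    calc (1 : ℝ) ≤ dist ((c j : ℝ)) ((c' j : ℝ)) := by
          rw [Real.dist_eq]
          have h1 : (1 : ℤ) ≤ |c j - c' j| := Int.one_le_abs (sub_ne_zero.mpr hj)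
          exact_mod_cast h1
      _ ≤ _ := dist_le_pi_dist (fun j => ((c j : ℝ))) (fun j => ((c' j : ℝ))) j
  -- injectivity of snd data
  have hcast_inj : ∀ c c' : Fin m → ℤ,
      (fun j => (c j : ℝ)) = (fun j => (c' j : ℝ)) → c = c' := by
    intro c c' h
    funext j
    exact_mod_cast congrFun h j
  refine ⟨?_, ?_, ?_⟩
  · -- (a)
    refine ⟨{ carrier := periodicCPLattice L0 t, zero_mem' := ?_, add_mem' := ?_, neg_mem' := ?_ }, rfl, ?_, ?_⟩
    · rintro a b ⟨x, hx, c, rfl⟩ ⟨x', hx', c', rfl⟩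
      refine ⟨x + x', add_mem hx hx', c + c', ?_⟩
      simp only [Prod.mk_add_mk, Prod.mk.injEq]
      refine ⟨?_, by funext j; simp⟩
      simp only [Pi.add_apply, Int.cast_add, add_smul, Finset.sum_add_distrib]
      abel
    · exact ⟨0, zero_mem _, 0, by simp [Prod.ext_iff]; rfl⟩
    · rintro a ⟨x, hx, c, rfl⟩
      refine ⟨-x, neg_mem hx, -c, ?_⟩
      simp only [Prod.neg_mk, Prod.mk.injEq]
      refine ⟨?_, by funext j; simp⟩
      simp [neg_smul, Finset.sum_neg_distrib]
      abel
    · -- discreteness of ℒ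
      refine discrete_of_sep (ε := min ε 1) (lt_min hε one_pos) ?_
      rintro p ⟨x, hx, c, rfl⟩ q ⟨x', hx', c', rfl⟩ hne
      by_cases hcc : c' = c
      · subst hcc
        have hxx : x' ≠ x := by
          intro h; exact hne (by rw [h])
        have hmem : x' - x ∈ L0 := sub_mem hx' hx
        have hep : ε ≤ ‖x' - x‖ := hεL0 _ hmem (sub_ne_zero.mpr hxx)
        calc min ε 1 ≤ ε := min_le_left _ _
          _ ≤ ‖x' - x‖ := hep
          _ = dist (x' + ∑ j, (c' j : ℝ) • t j) (x + ∑ j, (c' j : ℝ) • t j) := by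
              rw [dist_eq_norm]; congr 1; abel
          _ ≤ _ := by
              rw [Prod.dist_eq]; exact le_max_left _ _
      · calc min ε 1 ≤ 1 := min_le_right _ _
          _ ≤ dist (fun j => ((c' j : ℝ))) (fun j => ((c j : ℝ))) := hint _ _ hcc
          _ ≤ _ := by rw [Prod.dist_eq]; exact le_max_right _ _
    · -- span = ⊤
      set S := periodicCPLattice L0 t with hS
      have h2 : ∀ j, ((t j, Pi.single j 1) : (Fin d → ℝ) × (Fin m → ℝ)) ∈
          Submodule.span ℝ S := by
        intro j
        apply Submodule.subset_span
        refine ⟨0, zero_mem _, Pi.single j 1, ?_⟩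
        rw [Prod.ext_iff]
        constructor
        · simp [Pi.single_apply, ite_smul]
        · funext j'; simp [Pi.single_apply, apply_ite]
      have hfst : ∀ v : Fin d → ℝ, ((v, 0) : (Fin d → ℝ) × (Fin m → ℝ)) ∈
          Submodule.span ℝ S := by
        intro v
        have hv : (v, (0 : Fin m → ℝ)) ∈ Submodule.map
            (LinearMap.inl ℝ (Fin d → ℝ) (Fin m → ℝ)) (Submodule.span ℝ (L0 : Set (Fin d → ℝ))) := by
          rw [hL0.2]
          exact ⟨v, trivial, rfl⟩
        rw [← Submodule.span_image] at hv
        refine Submodule.span_mono ?_ hv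
        rintro _ ⟨x, hx, rfl⟩
        exact ⟨x, hx, 0, by simp [Prod.ext_iff]; rfl⟩
      have hsnd : ∀ j, (((0 : Fin d → ℝ), (Pi.single j 1 : Fin m → ℝ)) :
          (Fin d → ℝ) × (Fin m → ℝ)) ∈ Submodule.span ℝ S := by
        intro j
        have := Submodule.sub_mem _ (h2 j) (hfst (t j))
        simpa using this
      rw [eq_top_iff]
      rintro ⟨a, b⟩ -
      have key : ((a, b) : (Fin d → ℝ) × (Fin m → ℝ))
          = (a, 0) + ∑ j, b j • ((0 : Fin d → ℝ), (Pi.single j 1 : Fin m → ℝ)) := by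
        rw [Prod.ext_iff]
        constructor
        · simp [Prod.fst_sum]
        · simp [Prod.snd_sum, ← Pi.single_smul, Finset.univ_sum_single]
      rw [key]
      exact Submodule.add_mem _ (hfst a)
        (Submodule.sum_mem _ fun j _ => Submodule.smul_mem _ _ (hsnd j))
  · -- (b)
    have heq : Prod.snd '' periodicCPLattice L0 t
        = Set.range (fun c : Fin m → ℤ => fun j => (c j : ℝ)) := by
      ext f
      constructor
      · rintro ⟨p, ⟨x, hx, c, rfl⟩, rfl⟩
        exact ⟨c, rfl⟩
      · rintro ⟨c, rfl⟩
        exact ⟨(0 + ∑ j, (c j : ℝ) • t j, fun j => (c j : ℝ)), ⟨0, zero_mem _, c, rfl⟩, rfl⟩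
    have hpi : Set.range (fun c : Fin m → ℤ => fun j => (c j : ℝ))
        = Set.pi Set.univ (fun _ : Fin m => Set.range ((↑) : ℤ → ℝ)) := by
      ext f
      constructor
      · rintro ⟨c, rfl⟩ j _
        exact ⟨c j, rfl⟩
      · intro h
        choose c hc using fun j => h j (Set.mem_univ j)
        exact ⟨c, funext hc⟩
    have hclosed : IsClosed (Prod.snd '' periodicCPLattice L0 t) := by
      rw [heq, hpi]
      exact isClosed_set_pi fun j _ => Int.isClosedEmbedding_coe_real.isClosed_range
    have hdisc : DiscreteTopology (Prod.snd '' periodicCPLattice L0 t) := by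
      refine discrete_of_sep (ε := 1) one_pos ?_
      intro f hf g hg hne
      rw [heq] at hf hg
      obtain ⟨c, rfl⟩ := hf
      obtain ⟨c', rfl⟩ := hg
      exact hint c' c fun h => hne (by rw [h])
    have h0mem : (0 : Fin m → ℝ) ∈ Prod.snd '' periodicCPLattice L0 t := by
      rw [heq]
      exact ⟨0, by funext j; simp⟩
    refine ⟨heq, hclosed, hdisc, hclosed.closure_eq, ?_⟩
    rw [hclosed.closure_eq]
    haveI := hdisc
    haveI : TotallyDisconnectedSpace ↥(Prod.snd '' periodicCPLattice L0 t) :=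
      @TotallySeparatedSpace.totallyDisconnectedSpace _ _
        (TotallySeparatedSpace.of_discrete _)
    rw [connectedComponentIn_eq_image h0mem, connectedComponent_eq_singleton]
    simp
  · -- (c)
    ext a
    simp only [Set.mem_image, Set.mem_inter_iff, Set.mem_preimage, Set.mem_range,
      Set.mem_iUnion]
    constructor
    · rintro ⟨p, ⟨⟨x, hx, c, rfl⟩, j, hj⟩, rfl⟩
      refine ⟨j, x, hx, ?_⟩
      have hc : ∀ j', (c j' : ℝ) = if j' = j then 1 else 0 := by
        intro j'
        have := congrFun hj j'
        simpa [Pi.single_apply] using this.symm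
      have hsum : ∑ j', (c j' : ℝ) • t j' = t j := by
        simp [hc, ite_smul]
      simp only [hsum]
      abel
    · rintro ⟨j, x, hx, rfl⟩
      refine ⟨(x + ∑ j', ((Pi.single j 1 : Fin m → ℤ) j' : ℝ) • t j',
        fun j' => ((Pi.single j 1 : Fin m → ℤ) j' : ℝ)),
        ⟨⟨x, hx, Pi.single j 1, rfl⟩, j, ?_⟩, ?_⟩
      · funext j'; simp [Pi.single_apply, apply_ite]
      · have hsum : ∑ j', ((Pi.single j 1 : Fin m → ℤ) j' : ℝ) • t j' = t j := by
          simp [Pi.single_apply, ite_smul]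
        simp only [hsum]
        abel


end LorentzGas
end
end

section
/- For every h ∈ H one has π_int( δ^{1/n} ℤ^n h g ) ⊆ 𝒜, where δ^{1/n} ℤ^n h g = { δ^{1/n} x h g : x ∈ ℤ^n }. -/
noncomputable section
open MeasureTheory Matrix Topology Filter Set
open scoped Classical

namespace LorentzGas

/-- Euclidean space ℝ^k (row vectors). -/
abbrev E (k : ℕ) : Type := EuclideanSpace ℝ (Fin k)

/-- The open unit ball in ℝ^k. -/
def ballB (k : ℕ) : Set (E k) := Metric.ball 0 1

/-- The vector (0, w) ∈ ℝ^d obtained from w ∈ ℝ^{d-1}. -/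
def pad {d : ℕ} (w : Fin (d - 1) → ℝ) : Fin d → ℝ :=
  fun i => if h : i.val = 0 then 0 else w ⟨i.val - 1, by have := i.isLt; omega⟩

/-- The first standard basis vector e₁ ∈ ℝ^d. -/
def e1 (d : ℕ) : Fin d → ℝ := fun i => if i.val = 0 then 1 else 0

/-- ŵ = w / ‖w‖ (with the junk value `e₁` at w = 0). -/
def hatw {k : ℕ} (w : E k) : Fin k → ℝ :=
  if w = 0 then (fun j => if j.val = 0 then 1 else 0) else fun j => ‖w‖⁻¹ * w j

/-- The infinitesimal generator of the scattering matrix: first row (0, -t·u),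
first column (0, t·u)ᵀ, remaining block zero. -/
def sGen {d : ℕ} (t : ℝ) (u : Fin (d - 1) → ℝ) : Matrix (Fin d) (Fin d) ℝ :=
  Matrix.of fun i j =>
    if hi : i.val = 0 then
      (if hj : j.val = 0 then 0 else -t * u ⟨j.val - 1, by have := j.isLt; omega⟩)
    else if hj : j.val = 0 then t * u ⟨i.val - 1, by have := i.isLt; omega⟩
    else 0

/-- The scattering matrix S(w) = exp(sGen θ(‖w‖) ŵ). -/
def Smat {d : ℕ} (θ : ℝ → ℝ) (w : E (d - 1)) : Matrix (Fin d) (Fin d) ℝ :=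
  NormedSpace.exp (sGen (θ ‖w‖) (hatw w))

/-- The matrix D(r) = diag(r^{d-1}, r⁻¹, …, r⁻¹). -/
def Dmat (d : ℕ) (r : ℝ) : Matrix (Fin d) (Fin d) ℝ :=
  Matrix.diagonal fun i => if i.val = 0 then r ^ (d - 1) else r⁻¹

/-- Hypotheses (A) or (B) on the scattering angle θ ∈ C¹([0,1)). -/
def ScatteringHyp (θ : ℝ → ℝ) : Prop :=
  ContDiffOn ℝ 1 θ (Set.Ico 0 1) ∧
    ((StrictAntiOn θ (Set.Ico 0 1) ∧ θ 0 = Real.pi ∧ ∀ x ∈ Set.Ico (0 : ℝ) 1, 0 < θ x) ∨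
     (StrictMonoOn θ (Set.Ico 0 1) ∧ θ 0 = -Real.pi ∧ ∀ x ∈ Set.Ico (0 : ℝ) 1, θ x < 0))

/-- G = SL(d, ℝ). -/
abbrev SL (d : ℕ) : Type := Matrix.SpecialLinearGroup (Fin d) ℝ

instance (d : ℕ) : TopologicalSpace (SL d) :=
  inferInstanceAs (TopologicalSpace { A : Matrix (Fin d) (Fin d) ℝ // A.det = 1 })

/-- Γ = SL(d, ℤ), viewed as a subgroup of SL(d, ℝ). -/
def Gamma (d : ℕ) : Subgroup (SL d) :=
  (Matrix.SpecialLinearGroup.map (n := Fin d) (Int.castRingHom ℝ)).range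

/-- The setoid of right cosets Γg. -/
instance lorentzSetoid (d : ℕ) : Setoid (SL d) := QuotientGroup.rightRel (Gamma d)

/-- X = Γ\G, the space of right cosets Γg, g ∈ SL(d,ℝ), with the quotient topology. -/
def X (d : ℕ) : Type := Quotient (lorentzSetoid d)

instance (d : ℕ) : TopologicalSpace (X d) := inferInstanceAs (TopologicalSpace (Quotient _))
instance (d : ℕ) : MeasurableSpace (X d) := borel _
instance (d : ℕ) : BorelSpace (X d) := ⟨rfl⟩

/-- The coset Γ A of a matrix A with det A = 1 (junk value Γ·1 otherwise). -/
def toX {d : ℕ} (A : Matrix (Fin d) (Fin d) ℝ) : X d :=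
  if h : A.det = 1 then ⟦(⟨A, h⟩ : SL d)⟧ else ⟦1⟧

/-- Right multiplication by g on X = Γ\G. -/
def mulRightX {d : ℕ} (g : SL d) : X d → X d :=
  Quotient.map (fun x => x * g) (by
    intro a b hab
    have h : b * a⁻¹ ∈ Gamma d := QuotientGroup.rightRel_apply.mp hab
    refine QuotientGroup.rightRel_apply.mpr ?_
    simpa [mul_assoc] using h)

end LorentzGas

namespace LorentzGas

/-- The right-coset space H\G of a subgroup H of a group G. -/
def cosetSpace {G : Type*} [Group G] (H : Subgroup G) : Type _ :=
  Quotient (QuotientGroup.rightRel H)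

instance {G : Type*} [Group G] [TopologicalSpace G] (H : Subgroup G) :
    TopologicalSpace (cosetSpace H) := inferInstanceAs (TopologicalSpace (Quotient _))

instance {G : Type*} [Group G] [TopologicalSpace G] (H : Subgroup G) :
    MeasurableSpace (cosetSpace H) := borel _

/-- The right coset Hg in the right-coset space H\G. -/
def coset {G : Type*} [Group G] (H : Subgroup G) (g : G) : cosetSpace H :=
  Quotient.mk (QuotientGroup.rightRel H) g

/-- Right multiplication by g on a right-coset space H\G. -/
def rmul {G : Type*} [Group G] (H : Subgroup G) (g : G) : cosetSpace H → cosetSpace H :=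
  Quotient.lift (fun x => coset H (x * g)) (by
    intro a b hab
    have h : b * a⁻¹ ∈ H := QuotientGroup.rightRel_apply.mp hab
    exact Quot.sound (QuotientGroup.rightRel_apply.mpr (by simpa [mul_assoc] using h)))

/-- The coset space H'\H carries a right-H-invariant Borel probability measure. -/
def LatticeCondition {G : Type*} [Group G] [TopologicalSpace G] (H : Subgroup G) : Prop :=
  ∃ ν : Measure (cosetSpace H),
    IsProbabilityMeasure ν ∧ ∀ g : G, Measure.map (rmul H g) ν = ν

/-- The block-diagonal embedding A ↦ diag(A, 1_m) of d×d matrices into (d+m)×(d+m)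
matrices. -/
def embedMat (d m : ℕ) (A : Matrix (Fin d) (Fin d) ℝ) :
    Matrix (Fin (d + m)) (Fin (d + m)) ℝ :=
  Matrix.reindex finSumFinEquiv finSumFinEquiv
    (Matrix.fromBlocks A 0 0 (1 : Matrix (Fin m) (Fin m) ℝ))

lemma embedMat_det (d m : ℕ) (A : Matrix (Fin d) (Fin d) ℝ) :
    (embedMat d m A).det = A.det := by
  simp [embedMat, Matrix.det_fromBlocks_zero₂₁]

/-- diag(A, 1_m) as an element of SL(d+m, ℝ). -/
def embedSL {d m : ℕ} (A : SL d) : SL (d + m) :=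
  ⟨embedMat d m (A : Matrix (Fin d) (Fin d) ℝ), by rw [embedMat_det]; exact A.2⟩

/-- The embedding φ_g : SL(d,ℝ) → SL(n,ℝ), A ↦ g diag(A, 1_m) g⁻¹. -/
def phiSL {d m : ℕ} (g : SL (d + m)) (A : SL d) : SL (d + m) :=
  g * embedSL A * g⁻¹

/-- The projection ℝ^{d+m} → ℝ^d onto the first d coordinates (physical space). -/
def projPhys (d m : ℕ) (x : Fin (d + m) → ℝ) : Fin d → ℝ :=
  fun i => x (Fin.castAdd m i)

/-- The projection ℝ^{d+m} → ℝ^m onto the last m coordinates (internal space). -/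
def projInt (d m : ℕ) (x : Fin (d + m) → ℝ) : Fin m → ℝ :=
  fun j => x (Fin.natAdd d j)

/-- The lattice δ^{1/n} ℤ^n g ⊂ ℝ^n (row vectors). -/
def scaledLattice (d m : ℕ) (δ : ℝ) (A : Matrix (Fin (d + m)) (Fin (d + m)) ℝ) :
    Set (Fin (d + m) → ℝ) :=
  Set.range fun x : Fin (d + m) → ℤ =>
    (δ ^ (((d + m : ℕ) : ℝ))⁻¹) • ((fun i => (x i : ℝ)) ᵥ* A)

private lemma SL.continuous_mulLeft (n : ℕ) (a : SL n) :
    Continuous fun u : SL n => a * u :=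
  Continuous.subtype_mk
    (Continuous.matrix_mul continuous_const continuous_subtype_val) _

private lemma projInt_vecMul_embedMat (d m : ℕ) (A : Matrix (Fin d) (Fin d) ℝ)
    (v : Fin (d + m) → ℝ) :
    projInt d m (v ᵥ* embedMat d m A) = projInt d m v := by
  funext j
  simp only [projInt, embedMat, Matrix.vecMul, dotProduct, Matrix.reindex_apply,
    Matrix.submatrix_apply]
  rw [Fin.sum_univ_add]
  simp [Matrix.one_apply, mul_ite, mul_one, mul_zero]

/-- for every h in the Ratner subgroup H one has
π_int(δ^{1/n} ℤ^n h g) ⊆ 𝒜 = closure of π_int(ℒ), where ℒ = δ^{1/n} ℤ^n g. -/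
theorem statement17 (d m : ℕ) (hd : 2 ≤ d) (hm : 1 ≤ m)
    (δ : ℝ) (hδ : 0 < δ) (g : SL (d + m))
    (H : Subgroup (SL (d + m)))
    (hHclosed : IsClosed (H : Set (SL (d + m))))
    (hHconn : IsConnected (H : Set (SL (d + m))))
    (hHlat : LatticeCondition ((Gamma (d + m)).subgroupOf H))
    (hHphi : ∀ A : SL d, phiSL g A ∈ H)
    (hHclosure : closure (Set.range fun A : SL d => (⟦phiSL g A⟧ : X (d + m)))
      = Set.range (fun h : H => (⟦(h : SL (d + m))⟧ : X (d + m)))) :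
    ∀ h : SL (d + m), h ∈ H → ∀ x : Fin (d + m) → ℤ,
      projInt d m ((δ ^ (((d + m : ℕ) : ℝ))⁻¹) •
          ((fun i => (x i : ℝ)) ᵥ*
            ((h : Matrix (Fin (d + m)) (Fin (d + m)) ℝ) *
              (g : Matrix (Fin (d + m)) (Fin (d + m)) ℝ))))
        ∈ closure (projInt d m ''
            scaledLattice d m δ (g : Matrix (Fin (d + m)) (Fin (d + m)) ℝ)) := by
  intro h hH x
  classical
  set c : ℝ := δ ^ (((d + m : ℕ) : ℝ))⁻¹ with hc
  set xR : Fin (d + m) → ℝ := fun i => (x i : ℝ) with hxR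
  set f : SL (d + m) → (Fin m → ℝ) := fun y =>
    projInt d m (c • (xR ᵥ* ((y : Matrix (Fin (d + m)) (Fin (d + m)) ℝ) *
      (g : Matrix (Fin (d + m)) (Fin (d + m)) ℝ)))) with hfdef
  have hf : Continuous f := by
    have h1 : Continuous fun y : SL (d + m) =>
        c • (xR ᵥ* ((y : Matrix (Fin (d + m)) (Fin (d + m)) ℝ) *
          (g : Matrix (Fin (d + m)) (Fin (d + m)) ℝ))) :=
      (Continuous.matrix_vecMul continuous_const
        (Continuous.matrix_mul continuous_subtype_val continuous_const)).const_smul c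
    exact continuous_pi fun j => (continuous_apply (Fin.natAdd d j)).comp h1
  set T : Set (SL (d + m)) :=
    {y | ∃ γ ∈ Gamma (d + m), ∃ A : SL d, y = γ * phiSL g A} with hT
  have hTclos : h ∈ closure T := by
    rw [mem_closure_iff]
    intro U hU hhU
    have hopen : IsOpen (Quotient.mk (lorentzSetoid (d + m)) '' U : Set (X (d + m))) := by
      apply (isQuotientMap_quotient_mk' (s := lorentzSetoid (d + m))).isOpen_preimage.mp
      have heq : (Quotient.mk' : SL (d + m) → X (d + m)) ⁻¹'
          (Quotient.mk (lorentzSetoid (d + m)) '' U) =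
          ⋃ γ : Gamma (d + m), (fun u : SL (d + m) => (γ : SL (d + m))⁻¹ * u) ⁻¹' U := by
        ext z
        simp only [Set.mem_preimage, Set.mem_image, Set.mem_iUnion]
        constructor
        · rintro ⟨u, hu, huz⟩
          have hγ : z * u⁻¹ ∈ Gamma (d + m) :=
            QuotientGroup.rightRel_apply.mp (Quotient.exact huz)
          refine ⟨⟨z * u⁻¹, hγ⟩, ?_⟩
          show (z * u⁻¹)⁻¹ * z ∈ U
          simpa [mul_assoc] using hu
        · rintro ⟨γ, hγ⟩
          refine ⟨(γ : SL (d + m))⁻¹ * z, hγ, ?_⟩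
          refine Quotient.sound (QuotientGroup.rightRel_apply.mpr ?_)
          have : z * ((γ : SL (d + m))⁻¹ * z)⁻¹ = (γ : SL (d + m)) := by
            group
          rw [this]; exact γ.2
      erw [heq]
      exact isOpen_iUnion fun γ => hU.preimage (SL.continuous_mulLeft _ _)
    have hqh : (⟦h⟧ : X (d + m)) ∈
        closure (Set.range fun A : SL d => (⟦phiSL g A⟧ : X (d + m))) := by
      rw [hHclosure]; exact ⟨⟨h, hH⟩, rfl⟩
    have hmem : (⟦h⟧ : X (d + m)) ∈ (Quotient.mk (lorentzSetoid (d + m)) '' U) :=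
      ⟨h, hhU, rfl⟩
    obtain ⟨p, hpU, hpS⟩ := mem_closure_iff.mp hqh _ hopen hmem
    obtain ⟨u, huU, rfl⟩ := hpU
    obtain ⟨A, hA⟩ := hpS
    have hγ : phiSL g A * u⁻¹ ∈ Gamma (d + m) :=
      QuotientGroup.rightRel_apply.mp (Quotient.exact hA.symm)
    refine ⟨u, huU, ⟨(phiSL g A * u⁻¹)⁻¹, inv_mem hγ, A, ?_⟩⟩
    group
  have hmaps : Set.MapsTo f T (projInt d m ''
      scaledLattice d m δ (g : Matrix (Fin (d + m)) (Fin (d + m)) ℝ)) := by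
    rintro y ⟨γ, hγ, A, rfl⟩
    obtain ⟨B, hB⟩ := hγ
    have hcast : (fun i => (((x ᵥ* (B : Matrix (Fin (d + m)) (Fin (d + m)) ℤ)) i : ℤ) : ℝ))
        = xR ᵥ* (γ : Matrix (Fin (d + m)) (Fin (d + m)) ℝ) := by
      funext i
      have hγB : (γ : Matrix (Fin (d + m)) (Fin (d + m)) ℝ)
          = ((B : Matrix (Fin (d + m)) (Fin (d + m)) ℤ)).map (Int.castRingHom ℝ) := by
        rw [← hB]; rfl
      simp [hγB, Matrix.vecMul, dotProduct, hxR]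
    refine ⟨c • ((fun i => (((x ᵥ* (B : Matrix (Fin (d + m)) (Fin (d + m)) ℤ)) i : ℤ) : ℝ))
        ᵥ* (g : Matrix (Fin (d + m)) (Fin (d + m)) ℝ)), ⟨_, rfl⟩, ?_⟩
    rw [hcast]
    have hkey : ((γ * phiSL g A : SL (d + m)) : Matrix (Fin (d + m)) (Fin (d + m)) ℝ) *
        (g : Matrix (Fin (d + m)) (Fin (d + m)) ℝ)
        = ((γ : Matrix (Fin (d + m)) (Fin (d + m)) ℝ) *
            (g : Matrix (Fin (d + m)) (Fin (d + m)) ℝ)) *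
          embedMat d m (A : Matrix (Fin d) (Fin d) ℝ) := by
      have h1 : γ * phiSL g A * g = γ * g * embedSL A := by
        simp [phiSL, mul_assoc]
      calc ((γ * phiSL g A : SL (d + m)) : Matrix (Fin (d + m)) (Fin (d + m)) ℝ) *
            (g : Matrix (Fin (d + m)) (Fin (d + m)) ℝ)
          = ((γ * phiSL g A * g : SL (d + m)) : Matrix (Fin (d + m)) (Fin (d + m)) ℝ) := by
            simp [Matrix.SpecialLinearGroup.coe_mul]
        _ = ((γ * g * embedSL A : SL (d + m)) : Matrix (Fin (d + m)) (Fin (d + m)) ℝ) := by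
            rw [h1]
        _ = _ := by simp [Matrix.SpecialLinearGroup.coe_mul, embedSL]; rfl
    have hstep : c • (xR ᵥ* (((γ * phiSL g A : SL (d + m)) :
          Matrix (Fin (d + m)) (Fin (d + m)) ℝ) * (g : Matrix (Fin (d + m)) (Fin (d + m)) ℝ)))
        = (c • ((xR ᵥ* (γ : Matrix (Fin (d + m)) (Fin (d + m)) ℝ))
            ᵥ* (g : Matrix (Fin (d + m)) (Fin (d + m)) ℝ)))
          ᵥ* embedMat d m (A : Matrix (Fin d) (Fin d) ℝ) := by
      rw [hkey, ← Matrix.vecMul_vecMul, ← Matrix.vecMul_vecMul]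
      exact (Matrix.smul_vecMul _ _ _).symm
    show projInt d m _ = projInt d m _
    rw [hstep, projInt_vecMul_embedMat]
  have hfin := map_mem_closure hf hTclos hmaps
  exact hfin


end LorentzGas
end
end
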